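/- arXiv:nlin/0701059 — 7 statements merged into one kernel-verified Lean document; each statement's English description precedes it below -/
import Mathlib

section
/- Let F be the n-dimensional Jouanolou system of degree k (n ≥ 2, k ≥ 2) and let d ∈ ℂⁿ be any nonzero solution of F(d) = d. Then the characteristic polynomial of the Kovalevskaya matrix K(d) = F'(d) − E equals det(K(d) − Λ·E) = (−1)ⁿ·((Λ+1)ⁿ − kⁿ). In particular it is the same at every Darboux point. -/
open MvPolynomial
open Fin.NatCast


lemma perm_classify (m : ℕ) (σ : Equiv.Perm (Fin (m+2)))
    (h : ∀ i, σ i = i ∨ σ i = i - 1) :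
    σ = 1 ∨ σ = (finRotate (m+2))⁻¹ := by
  by_cases h1 : σ = 1
  · exact Or.inl h1
  right
  have h10 : (1 : Fin (m+2)) ≠ 0 := by
    simp [Fin.ext_iff, Nat.mod_eq_of_lt (show 1 < m+2 by omega)]
  obtain ⟨j, hj⟩ : ∃ j, σ j ≠ j := by
    by_contra hc
    push_neg at hc
    exact h1 (Equiv.ext hc)
  have hjs : σ j = j - 1 := (h j).resolve_left hj
  have key : ∀ t : ℕ, σ (j - (t : Fin (m+2))) = j - (t : Fin (m+2)) - 1 := by
    intro t
    induction t with
    | zero => simpa using hjs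
    | succ t ih =>
      have hcast : ((t+1 : ℕ) : Fin (m+2)) = (t : Fin (m+2)) + 1 := by push_cast; ring
      rw [hcast, sub_add_eq_sub_sub]
      rcases h (j - (t : Fin (m+2)) - 1) with hh | hh
      · exfalso
        have heq : j - (t : Fin (m+2)) - 1 = j - (t : Fin (m+2)) := by
          apply σ.injective; rw [hh, ih]
        exact h10 (sub_eq_self.mp heq)
      · exact hh
  have hall : ∀ i, σ i = i - 1 := by
    intro i
    have h2 : ((((j - i : Fin (m+2))).val : ℕ) : Fin (m+2)) = j - i :=
      Fin.cast_val_eq_self _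
    have := key (j - i).val
    rwa [h2, sub_sub_cancel] at this
  apply Equiv.ext
  intro i
  rw [hall i]
  symm
  rw [Equiv.Perm.inv_def, Equiv.symm_apply_eq, finRotate_succ_apply, sub_add_cancel]
lemma det_cyclic (m : ℕ) (a : Fin (m+2) → ℂ) (b : ℂ) :
    (Matrix.of fun i j : Fin (m+2) =>
        if j = i + 1 then a i else if j = i then b else 0).det
      = b ^ (m+2) + (-1 : ℂ) ^ (m+1) * ∏ i, a i := by
  classical
  have h10 : (1 : Fin (m+2)) ≠ 0 := by
    simp [Fin.ext_iff, Nat.mod_eq_of_lt (show 1 < m+2 by omega)]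
  set τ : Equiv.Perm (Fin (m+2)) := (finRotate (m+2))⁻¹ with hτ
  have hτa : ∀ i, τ i = i - 1 := by
    intro i
    rw [hτ, Equiv.Perm.inv_def, Equiv.symm_apply_eq, finRotate_succ_apply, sub_add_cancel]
  have hne : (1 : Equiv.Perm (Fin (m+2))) ≠ τ := by
    intro h
    have := hτa 0
    rw [← h] at this
    simp only [Equiv.Perm.one_apply, zero_sub] at this
    exact h10 (by rw [← neg_eq_zero, ← this])
  rw [Matrix.det_apply]
  have hvanish : ∀ σ ∈ (Finset.univ : Finset (Equiv.Perm (Fin (m+2)))) \ {1, τ},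
      Equiv.Perm.sign σ • ∏ i, Matrix.of (fun i j : Fin (m+2) =>
        if j = i + 1 then a i else if j = i then b else 0) (σ i) i = 0 := by
    intro σ hσ
    simp only [Finset.mem_sdiff, Finset.mem_insert, Finset.mem_singleton] at hσ
    push_neg at hσ
    obtain ⟨-, hσ1, hστ⟩ := hσ
    have : ¬ (∀ i, σ i = i ∨ σ i = i - 1) := by
      intro h
      rcases perm_classify m σ h with h | h
      · exact hσ1 h
      · exact hστ h
    push_neg at this
    obtain ⟨i, hi1, hi2⟩ := this
    have hz : Matrix.of (fun i j : Fin (m+2) =>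
        if j = i + 1 then a i else if j = i then b else 0) (σ i) i = 0 := by
      simp only [Matrix.of_apply,
        if_neg (show ¬ i = σ i + 1 from fun h => hi2 (eq_sub_iff_add_eq.mpr h.symm)),
        if_neg (show ¬ i = σ i from fun h => hi1 h.symm)]
    have hp : (∏ j : Fin (m+2), Matrix.of (fun i j : Fin (m+2) =>
        if j = i + 1 then a i else if j = i then b else 0) (σ j) j) = 0 :=
      Finset.prod_eq_zero (Finset.mem_univ i) hz
    rw [hp, smul_zero]
  rw [← Finset.sum_subset (Finset.subset_univ ({1, τ} : Finset (Equiv.Perm (Fin (m+2)))))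
    (fun σ _ hσ => hvanish σ (Finset.mem_sdiff.mpr ⟨Finset.mem_univ σ, hσ⟩))]
  rw [Finset.sum_pair hne]
  have hid : (Equiv.Perm.sign (1 : Equiv.Perm (Fin (m+2))) • ∏ i, Matrix.of
      (fun i j : Fin (m+2) => if j = i + 1 then a i else if j = i then b else 0)
      ((1 : Equiv.Perm (Fin (m+2))) i) i) = b ^ (m+2) := by
    have hni : ∀ i : Fin (m+2), (i : Fin (m+2)) ≠ i + 1 := by
      intro i h
      exact h10 (by rwa [left_eq_add] at h)
    simp only [Equiv.Perm.one_apply, Matrix.of_apply, map_one, one_smul]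
    simp [hni, Finset.card_univ]
  have hτterm : (Equiv.Perm.sign τ • ∏ i, Matrix.of
      (fun i j : Fin (m+2) => if j = i + 1 then a i else if j = i then b else 0)
      (τ i) i) = (-1 : ℂ) ^ (m+1) * ∏ i, a i := by
    have hsign : Equiv.Perm.sign τ = (-1) ^ (m+1) := by
      rw [hτ, map_inv, sign_finRotate, Int.units_inv_eq_self, show m + 2 - 1 = m + 1 by omega]
    have hprod : (∏ i, Matrix.of
        (fun i j : Fin (m+2) => if j = i + 1 then a i else if j = i then b else 0)
        (τ i) i) = ∏ i, a i := by
      rw [Finset.prod_congr rfl (fun i _ => by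
        rw [hτa i, Matrix.of_apply, if_pos (by rw [sub_add_cancel])])]
      exact Fintype.prod_equiv (Equiv.subRight (1 : Fin (m+2))) _ _ (fun i => rfl)
    rw [hprod, hsign, Units.smul_def, zsmul_eq_mul]
    push_cast
    ring
  rw [hid, hτterm]
/-- For the `n`-dimensional Jouanolou system of degree `k` and any
normalized Darboux point `d`, the characteristic polynomial of the Kovalevskaya matrix
`K(d) = F'(d) - E` satisfies `det(K(d) - Λ·E) = (-1)ⁿ·((Λ+1)ⁿ - kⁿ)` for all `Λ`;
in particular it is the same at every Darboux point. -/
theorem jouanolou_kovalevskaya_charpoly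
    (n k : ℕ) [NeZero n] (hn : 2 ≤ n) (hk : 2 ≤ k)
    (d : Fin n → ℂ) (hd0 : d ≠ 0)
    (hd : ∀ i : Fin n, eval d ((X (i + 1) : MvPolynomial (Fin n) ℂ) ^ k) = d i) :
    ∀ Λ : ℂ,
      ((Matrix.of fun i j : Fin n =>
          eval d (pderiv j ((X (i + 1) : MvPolynomial (Fin n) ℂ) ^ k))) - 1
        - Λ • 1).det
      = (-1 : ℂ) ^ n * ((Λ + 1) ^ n - (k : ℂ) ^ n) := by
  obtain ⟨m, rfl⟩ : ∃ m, n = m + 2 := ⟨n - 2, by omega⟩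
  intro Λ
  have h10 : (1 : Fin (m+2)) ≠ 0 := by
    simp [Fin.ext_iff, Nat.mod_eq_of_lt (show 1 < m+2 by omega)]
  have hd' : ∀ i : Fin (m+2), d (i+1) ^ k = d i := fun i => by simpa using hd i
  -- all coordinates are nonzero
  have hdnz : ∀ i, d i ≠ 0 := by
    by_contra hc
    push_neg at hc
    obtain ⟨j, hj⟩ := hc
    have hall : ∀ t : ℕ, d (j + (t : Fin (m+2))) = 0 := by
      intro t
      induction t with
      | zero => simpa using hj
      | succ t ih =>
        have hcast : ((t+1 : ℕ) : Fin (m+2)) = (t : Fin (m+2)) + 1 := by push_cast; ring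
        rw [hcast, ← add_assoc]
        have := hd' (j + (t : Fin (m+2)))
        rw [ih] at this
        exact pow_eq_zero_iff (by omega) |>.mp this
    apply hd0
    funext i
    have h2 : ((((i - j : Fin (m+2))).val : ℕ) : Fin (m+2)) = i - j :=
      Fin.cast_val_eq_self _
    have := hall (i - j).val
    rwa [h2, add_sub_cancel] at this
  -- product of coordinates
  set P : ℂ := ∏ i, d i with hP
  have hPne : P ≠ 0 := Finset.prod_ne_zero_iff.mpr (fun i _ => hdnz i)
  have hshift : (∏ i : Fin (m+2), d (i + 1)) = P := by
    rw [hP]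
    have := Equiv.prod_comp (Equiv.addRight (1 : Fin (m+2))) d
    simpa using this
  have hPk : P ^ k = P := by
    calc P ^ k = (∏ i : Fin (m+2), d (i+1)) ^ k := by rw [hshift]
    _ = ∏ i : Fin (m+2), d (i+1) ^ k := by rw [Finset.prod_pow]
    _ = ∏ i : Fin (m+2), d i := Finset.prod_congr rfl (fun i _ => hd' i)
    _ = P := hP.symm
  have hP1 : P ^ (k - 1) = 1 := by
    have h1 : P ^ (k-1) * P = 1 * P := by
      rw [one_mul, ← pow_succ]
      rw [show k - 1 + 1 = k by omega, hPk]
    exact mul_right_cancel₀ hPne h1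
  -- identify the matrix with the cyclic matrix
  have hmat : ((Matrix.of fun i j : Fin (m+2) =>
          eval d (pderiv j ((X (i + 1) : MvPolynomial (Fin (m+2)) ℂ) ^ k))) - 1
        - Λ • 1)
      = Matrix.of (fun i j : Fin (m+2) =>
          if j = i + 1 then (k : ℂ) * d (i+1) ^ (k-1) else if j = i then -(Λ+1) else 0) := by
    ext i j
    have hne : i + 1 ≠ i := fun h => h10 (by rwa [add_eq_left] at h)
    simp only [Matrix.sub_apply, Matrix.smul_apply, Matrix.of_apply, Matrix.one_apply,
      smul_eq_mul, pderiv_pow, pderiv_X]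
    have hne' : i ≠ i + 1 := fun h => hne h.symm
    by_cases h1 : j = i + 1
    · subst h1
      simp [hne', Pi.single_apply]
    · rw [if_neg h1]
      by_cases h2 : j = i
      · subst h2
        have h5 : (1 : Fin (m+2)) + j ≠ j := fun h => h10 (by rwa [add_eq_right] at h)
        simp [Pi.single_apply, h5, hne]
        ring
      · have h3 : i + 1 ≠ j := fun h => h1 h.symm
        have h4 : i ≠ j := fun h => h2 h.symm
        simp [Pi.single_apply, h3, h4, h2, h1]
  rw [hmat, det_cyclic]
  have hprod : (∏ i : Fin (m+2), (k : ℂ) * d (i+1) ^ (k-1)) = (k : ℂ) ^ (m+2) := by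
    rw [Finset.prod_mul_distrib, Finset.prod_const, Finset.card_univ,
      Finset.prod_pow, hshift, hP1, mul_one, Fintype.card_fin]
  rw [hprod]
  have h : (-1:ℂ)^(m+2) = -((-1:ℂ)^(m+1)) := by rw [pow_succ]; ring
  rw [neg_pow, h]
  ring
end

section
/- Let F be the n-dimensional Jouanolou system of degree k (n ≥ 2, k ≥ 2) and let d ∈ ℂⁿ be any nonzero solution of F(d) = d. Then the multiset of eigenvalues of the Kovalevskaya matrix K(d) = F'(d) − E is exactly {k·ζ − 1 : ζⁿ = 1}, i.e. the Kovalevskaya exponents are Λᵢ = k·ε^{i} − 1, i = 1,…,n, where ε is a primitive n-th root of unity; the value k − 1 (obtained for ζ = 1) is the trivial exponent. -/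
open MvPolynomial

section JouanolouAux
open Polynomial Finset
open Fin.CommRing

private lemma fin_one_ne_zero' {n : ℕ} [NeZero n] (hn : 2 ≤ n) : (1 : Fin n) ≠ 0 := by
  intro h
  have h1 : (1 : Fin n).val = 1 % n := rfl
  rw [h] at h1
  simp only [Fin.val_zero] at h1
  rw [Nat.mod_eq_of_lt (by omega)] at h1
  omega

private lemma perm_class {n : ℕ} [NeZero n] (hn : 2 ≤ n) (σ : Equiv.Perm (Fin n))
    (h : ∀ i, σ i = i ∨ σ i = i - 1) :
    σ = 1 ∨ σ = Equiv.subRight (1 : Fin n) := by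
  by_cases hid : ∀ i, σ i = i
  · left; ext i; simp [hid i]
  · right
    push_neg at hid
    obtain ⟨i₀, hi₀⟩ := hid
    have h0 : σ i₀ = i₀ - 1 := (h i₀).resolve_left hi₀
    have key : ∀ m : ℕ, σ (i₀ - (m : Fin n)) = i₀ - (m : Fin n) - 1 := by
      intro m
      induction m with
      | zero => simpa using h0
      | succ m ih =>
        have hcast : ((m + 1 : ℕ) : Fin n) = (m : Fin n) + 1 := by push_cast; ring
        rw [hcast]
        have hrw : i₀ - ((m : Fin n) + 1) = i₀ - (m : Fin n) - 1 := by ring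
        rw [hrw]
        rcases h (i₀ - (m : Fin n) - 1) with hja | hja
        · exfalso
          have hinj : i₀ - (m : Fin n) - 1 = i₀ - (m : Fin n) :=
            σ.injective (by rw [hja, ih])
          exact fin_one_ne_zero' hn (sub_eq_self.mp hinj)
        · exact hja
    ext j
    have hkey := key (i₀ - j).val
    rw [Fin.cast_val_eq_self, sub_sub_cancel] at hkey
    simp [Equiv.subRight_apply, hkey]
end JouanolouAux

/-- For the `n`-dimensional Jouanolou system of degree `k` and any
normalized Darboux point `d`, the multiset of eigenvalues (roots of the characteristic
polynomial, with multiplicity) of the Kovalevskaya matrix `K(d) = F'(d) - E` is exactly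
`{k·εⁱ - 1 : i = 1,…,n}` where `ε` is a primitive `n`-th root of unity; the value
`k - 1` (for `ζ = 1`) is among them (the trivial exponent). -/
theorem jouanolou_kovalevskaya_exponents
    (n k : ℕ) [NeZero n] (hn : 2 ≤ n) (hk : 2 ≤ k)
    (d : Fin n → ℂ) (hd0 : d ≠ 0)
    (hd : ∀ i : Fin n, eval d ((X (i + 1) : MvPolynomial (Fin n) ℂ) ^ k) = d i)
    (ε : ℂ) (hε : IsPrimitiveRoot ε n) :
    (((Matrix.of fun i j : Fin n =>
          eval d (pderiv j ((X (i + 1) : MvPolynomial (Fin n) ℂ) ^ k))) - 1).charpoly.roots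
      = (Multiset.range n).map (fun i => (k : ℂ) * ε ^ (i + 1) - 1)) ∧
    ((k : ℂ) - 1) ∈
      (((Matrix.of fun i j : Fin n =>
          eval d (pderiv j ((X (i + 1) : MvPolynomial (Fin n) ℂ) ^ k))) - 1).charpoly.roots) := by
  classical
  have hn0 : 0 < n := by omega
  have hk0 : (k : ℂ) ≠ 0 := Nat.cast_ne_zero.mpr (by omega)
  -- basic facts about d
  have hd' : ∀ i : Fin n, d (i + 1) ^ k = d i := by
    intro i; simpa using hd i
  have hone : (1 : Fin n) ≠ 0 := fin_one_ne_zero' hn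
  have hdne : ∀ i, d i ≠ 0 := by
    intro i hi
    apply hd0
    funext j
    open Fin.CommRing in
    have key : ∀ m : ℕ, d (i + (m : Fin n)) = 0 := by
      intro m
      induction m with
      | zero => simpa using hi
      | succ m ih =>
        have hpow : d (i + (m : Fin n) + 1) ^ k = 0 := by rw [hd' (i + (m : Fin n)), ih]
        have hz : d (i + (m : Fin n) + 1) = 0 :=
          pow_eq_zero_iff (by omega : k ≠ 0) |>.mp hpow
        have hcast : ((m + 1 : ℕ) : Fin n) = (m : Fin n) + 1 := by push_cast; ring
        rw [hcast, ← add_assoc]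
        exact hz
    have := key (j - i).val
    rwa [Fin.cast_val_eq_self, add_sub_cancel] at this
  -- the product of components
  set P : ℂ := ∏ i, d i with hP
  have hPne : P ≠ 0 := Finset.prod_ne_zero_iff.mpr fun i _ => hdne i
  have hPk : P ^ k = P := by
    have h1 : ∏ i, d (i + 1) = P := by
      rw [hP]
      exact Fintype.prod_equiv (Equiv.addRight (1 : Fin n)) _ _ (fun i => rfl)
    calc P ^ k = (∏ i, d (i + 1)) ^ k := by rw [h1]
      _ = ∏ i, d (i + 1) ^ k := by rw [Finset.prod_pow]
      _ = ∏ i, d i := by simp_rw [hd']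
      _ = P := rfl
  have hPk1 : P ^ (k - 1) = 1 := by
    have hks : k - 1 + 1 = k := by omega
    have : P * P ^ (k - 1) = P * 1 := by
      rw [mul_one, ← pow_succ', hks, hPk]
    exact mul_left_cancel₀ hPne this
  -- the matrix entries
  set c : Fin n → ℂ := fun i => (k : ℂ) * d (i + 1) ^ (k - 1) with hc
  set K : Matrix (Fin n) (Fin n) ℂ :=
    (Matrix.of fun i j : Fin n =>
        eval d (pderiv j ((X (i + 1) : MvPolynomial (Fin n) ℂ) ^ k))) - 1 with hKdef
  have hKentry : ∀ a b : Fin n,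
      K a b = (if b = a + 1 then c a else 0) - (if a = b then 1 else 0) := by
    intro a b
    rw [hKdef]
    simp only [Matrix.sub_apply, Matrix.of_apply, Matrix.one_apply]
    congr 1
    rw [pderiv_pow]
    simp only [pderiv_X, Pi.single_apply]
    rcases eq_or_ne b (a + 1) with h | h
    · simp [h, mul_comm, hc]
    · simp [h, Ne.symm h]
  have haddne : ∀ a : Fin n, a + 1 ≠ a := by
    intro a h
    exact hone (by simpa using (left_eq_add.mp h.symm))
  have hKdiag : ∀ a : Fin n, K a a = -1 := by
    intro a
    rw [hKentry]
    simp [Ne.symm (haddne a)]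
  have hKsub : ∀ a : Fin n, K (a - 1) a = c (a - 1) := by
    intro a
    rw [hKentry]
    have h1 : a = a - 1 + 1 := by open Fin.CommRing in ring
    have h2 : a - 1 ≠ a := by
      intro h; exact hone (sub_eq_self.mp h)
    simp [← h1, h2]
  have hKzero : ∀ a b : Fin n, a ≠ b → a ≠ b - 1 → K a b = 0 := by
    intro a b h1 h2
    rw [hKentry]
    have : b ≠ a + 1 := by
      intro h; apply h2; rw [h]; open Fin.CommRing in ring
    simp [this, h1]
  -- product of the c's
  have hcprod : ∏ i, c i = (k : ℂ) ^ n := by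
    rw [hc]
    have h1 : ∏ i : Fin n, d (i + 1) ^ (k - 1) = P ^ (k - 1) := by
      rw [Finset.prod_pow]
      congr 1
      rw [hP]
      exact Fintype.prod_equiv (Equiv.addRight (1 : Fin n)) _ _ (fun i => rfl)
    rw [Finset.prod_mul_distrib, Finset.prod_const, Finset.card_univ, Fintype.card_fin,
      h1, hPk1, mul_one]
  -- compute the characteristic polynomial
  have hcp : K.charpoly
      = (Polynomial.X + 1) ^ n - Polynomial.C ((k : ℂ)) ^ n := by
    obtain ⟨m, rfl⟩ : ∃ m, n = m + 1 := ⟨n - 1, by omega⟩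
    rw [Matrix.charpoly, Matrix.det_apply]
    have hcyc_ne : (1 : Equiv.Perm (Fin (m+1))) ≠ Equiv.subRight (1 : Fin (m+1)) := by
      intro h
      have h0 := DFunLike.congr_fun h (0 : Fin (m+1))
      simp only [Equiv.Perm.coe_one, id_eq, Equiv.subRight_apply] at h0
      exact hone (sub_eq_self.mp h0.symm)
    rw [Finset.sum_eq_add_of_mem (1 : Equiv.Perm (Fin (m+1)))
        (Equiv.subRight (1 : Fin (m+1))) (Finset.mem_univ _) (Finset.mem_univ _) hcyc_ne ?_]
    · -- the two surviving terms
      have hid : (Equiv.Perm.sign (1 : Equiv.Perm (Fin (m+1)))) •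
            ∏ i, K.charmatrix ((1 : Equiv.Perm (Fin (m+1))) i) i
          = (Polynomial.X + 1) ^ (m+1) := by
        simp only [Equiv.Perm.sign_one, one_smul, Equiv.Perm.coe_one, id_eq]
        have hdg : ∀ i : Fin (m+1), K.charmatrix i i = Polynomial.X + 1 := by
          intro i
          rw [Matrix.charmatrix_apply_eq, hKdiag]
          simp
        simp_rw [hdg]
        rw [Finset.prod_const, Finset.card_univ, Fintype.card_fin]
      have hsign : Equiv.Perm.sign (Equiv.subRight (1 : Fin (m+1))) = (-1 : ℤˣ) ^ m := by
        have heq : Equiv.subRight (1 : Fin (m+1)) = (finRotate (m+1))⁻¹ := by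
          apply Equiv.ext
          intro i
          rw [Equiv.subRight_apply, Equiv.Perm.inv_def, Equiv.eq_symm_apply,
            finRotate_succ_apply]
          open Fin.CommRing in ring
        rw [heq, Equiv.Perm.sign_inv, sign_finRotate, Nat.add_sub_cancel]
      have hcycterm : (Equiv.Perm.sign (Equiv.subRight (1 : Fin (m+1)))) •
            ∏ i, K.charmatrix ((Equiv.subRight (1 : Fin (m+1))) i) i
          = -(Polynomial.C ((k : ℂ))) ^ (m+1) := by
        have hentry : ∀ i : Fin (m+1),
            K.charmatrix ((Equiv.subRight (1 : Fin (m+1))) i) i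
            = -Polynomial.C (c (i - 1)) := by
          intro i
          rw [Equiv.subRight_apply]
          have h2 : i - 1 ≠ i := fun h => hone (sub_eq_self.mp h)
          rw [Matrix.charmatrix_apply_ne _ _ _ h2, hKsub]
        simp_rw [hentry]
        have hre : ∏ i : Fin (m+1), -Polynomial.C (c (i - 1))
            = ∏ i : Fin (m+1), -Polynomial.C (c i) :=
          Fintype.prod_equiv (Equiv.subRight (1 : Fin (m+1))) _ _ (fun i => rfl)
        rw [hre]
        have hpn : ∏ i : Fin (m+1), -Polynomial.C (c i)
            = (-1 : Polynomial ℂ) ^ (m+1) * Polynomial.C ((k:ℂ) ^ (m+1)) := by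
          simp_rw [neg_eq_neg_one_mul (Polynomial.C (c _))]
          rw [Finset.prod_mul_distrib, Finset.prod_const, Finset.card_univ,
            Fintype.card_fin, ← map_prod, hcprod]
        rw [hpn, hsign]
        rw [Units.smul_def, Units.val_pow_eq_pow_val, Units.val_neg, Units.val_one,
          zsmul_eq_mul]
        push_cast
        rw [← mul_assoc, ← pow_add, map_pow]
        have hodd : Odd (m + (m + 1)) := ⟨m, by ring⟩
        rw [hodd.neg_one_pow]
        ring
      rw [hid, hcycterm]
      ring
    · -- all other permutations contribute 0
      intro σ _ hσ
      obtain ⟨hσ1, hσ2⟩ := hσ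
      have hnall : ¬ (∀ i, σ i = i ∨ σ i = i - 1) := by
        intro hall
        rcases perm_class hn σ hall with h | h
        · exact hσ1 h
        · exact hσ2 h
      push_neg at hnall
      obtain ⟨i, hi1, hi2⟩ := hnall
      have hz : K.charmatrix (σ i) i = 0 := by
        rw [Matrix.charmatrix_apply_ne _ _ _ hi1, hKzero (σ i) i hi1 hi2, map_zero, neg_zero]
      have hz2 : ∏ j, K.charmatrix (σ j) j = 0 :=
        Finset.prod_eq_zero (Finset.mem_univ i) hz
      rw [hz2, smul_zero]
  -- base product identity from the primitive root
  have hbase : ∀ y : ℂ, y ^ n - 1 = ∏ i ∈ Finset.range n, (y - ε ^ i) := by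
    intro y
    have hm : (Polynomial.X ^ n - Polynomial.C (1:ℂ)).Monic :=
      Polynomial.monic_X_pow_sub_C _ (by omega)
    have hsp : ((Polynomial.X ^ n - Polynomial.C (1:ℂ))).Splits :=
      IsAlgClosed.splits _
    have heq := Polynomial.Splits.eq_prod_roots_of_monic hsp hm
    have hroots : (Polynomial.X ^ n - Polynomial.C (1:ℂ)).roots
        = (Multiset.range n).map (fun i => ε ^ i) := by
      have h := hε.nthRoots_eq (one_pow n)
      rw [Polynomial.nthRoots] at h
      simpa using h
    rw [hroots] at heq
    have heval := congrArg (Polynomial.eval y) heq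
    rw [Polynomial.eval_sub, Polynomial.eval_pow, Polynomial.eval_X, Polynomial.eval_C,
      Multiset.map_map, Polynomial.eval_multiset_prod, Multiset.map_map] at heval
    rw [heval, Finset.prod_eq_multiset_prod, Finset.range_val]
    apply congrArg Multiset.prod
    apply Multiset.map_congr rfl
    intro i _
    simp
  have hscal : ∀ y : ℂ, ∏ i ∈ Finset.range n, (y - (k : ℂ) * ε ^ i)
      = y ^ n - (k : ℂ) ^ n := by
    intro y
    have h1 : (y / (k:ℂ)) ^ n - 1 = ∏ i ∈ Finset.range n, (y / (k:ℂ) - ε ^ i) := hbase _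
    have h2 : ∏ i ∈ Finset.range n, (y - (k : ℂ) * ε ^ i)
        = ∏ i ∈ Finset.range n, ((k : ℂ) * (y / (k : ℂ) - ε ^ i)) := by
      apply Finset.prod_congr rfl
      intro i _
      field_simp
    rw [h2, Finset.prod_mul_distrib, Finset.prod_const, Finset.card_range, ← h1]
    rw [div_pow, mul_sub, mul_one, mul_div_assoc', mul_div_cancel_left₀ _ (pow_ne_zero n hk0)]
  have hshift : ∀ y : ℂ, ∏ i ∈ Finset.range n, (y - (k : ℂ) * ε ^ (i + 1))
      = ∏ i ∈ Finset.range n, (y - (k : ℂ) * ε ^ i) := by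
    intro y
    set g : ℕ → ℂ := fun i => y - (k : ℂ) * ε ^ i with hg
    have hL : ∏ i ∈ Finset.range n, g (i + 1) = ∏ i ∈ Finset.Ico 1 (n + 1), g i := by
      rw [Finset.prod_Ico_eq_prod_range]
      simp [add_comm]
    have hgn : g n = g 0 := by
      rw [hg]; simp [hε.pow_eq_one]
    calc ∏ i ∈ Finset.range n, g (i + 1)
        = ∏ i ∈ Finset.Ico 1 (n + 1), g i := hL
      _ = (∏ i ∈ Finset.Ico 1 n, g i) * g n :=
          Finset.prod_Ico_succ_top (by omega) g
      _ = g 0 * ∏ i ∈ Finset.Ico 1 n, g i := by rw [hgn]; ring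
      _ = ∏ i ∈ Finset.range n, g i := by
          rw [Finset.range_eq_Ico, Finset.prod_eq_prod_Ico_succ_bot hn0 g]
  -- factor the characteristic polynomial
  have hfac : K.charpoly = ((Multiset.range n).map
      (fun i => Polynomial.X - Polynomial.C ((k : ℂ) * ε ^ (i + 1) - 1))).prod := by
    have hpoly : ∏ i ∈ Finset.range n,
        (Polynomial.X - Polynomial.C ((k : ℂ) * ε ^ (i + 1)))
        = Polynomial.X ^ n - Polynomial.C ((k : ℂ)) ^ n := by
      apply Polynomial.funext
      intro y
      simp only [Polynomial.eval_prod, Polynomial.eval_sub, Polynomial.eval_X,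
        Polynomial.eval_pow, Polynomial.eval_C]
      rw [hshift y, hscal y]
    have hcomp := congrArg (Polynomial.aeval (Polynomial.X + 1 : Polynomial ℂ)) hpoly
    rw [map_prod] at hcomp
    simp only [map_sub, map_pow, Polynomial.aeval_X, Polynomial.aeval_C,
      Polynomial.algebraMap_eq] at hcomp
    rw [hcp, ← hcomp, Finset.prod_eq_multiset_prod, Finset.range_val]
    apply congrArg Multiset.prod
    apply Multiset.map_congr rfl
    intro i _
    rw [Polynomial.C_sub, Polynomial.C_1]
    ring
  have hmm : (Multiset.range n).map
      (fun i => Polynomial.X - Polynomial.C ((k : ℂ) * ε ^ (i + 1) - 1))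
      = ((Multiset.range n).map (fun i => (k : ℂ) * ε ^ (i + 1) - 1)).map
          (fun a => Polynomial.X - Polynomial.C a) := by
    rw [Multiset.map_map]
    rfl
  constructor
  · rw [hfac, hmm, Polynomial.roots_multiset_prod_X_sub_C]
  · rw [hfac, hmm, Polynomial.roots_multiset_prod_X_sub_C]
    rw [Multiset.mem_map]
    refine ⟨n - 1, Multiset.mem_range.mpr (by omega), ?_⟩
    have hs : n - 1 + 1 = n := by omega
    rw [hs, hε.pow_eq_one, mul_one]
end

section
/- Let n ≥ 2, let k be an integer (k ≥ 2), let ε ∈ ℂ be a primitive n-th root of unity, and let Λ = (Λ₁,…,Λ_{n−1}) with Λⱼ = k·ε^{j} − 1 for j = 1,…,n−1 (the nontrivial Kovalevskaya exponents of the Jouanolou system). Then for every 0 ≤ r ≤ n−1 the elementary symmetric polynomial of degree r satisfies τ_r(Λ) = (−1)^r · Σ_{i=0}^{r} C(n−i−1, r−i) · k^{i}. In particular τ₁(Λ) = 1 − n − k and τ_{n−1}(Λ) = (−1)^{n−1}(kⁿ−1)/(k−1). -/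
open Polynomial in
theorem jouanolou_aux_prod (n k : ℕ) (hn : 2 ≤ n) (ε : ℂ) (hε : IsPrimitiveRoot ε n) :
    (((Multiset.range (n - 1)).map (fun j => (k : ℂ) * ε ^ (j + 1) - 1)).map
      (fun r => (X : ℂ[X]) + C r)).prod
    = ∑ i ∈ Finset.range n, ((X : ℂ[X]) - C 1) ^ i * C ((-(k : ℂ)) ^ (n - 1 - i)) := by
  have hn0 : n ≠ 0 := by omega
  set K : ℂ := -(k : ℂ) with hK
  have h1 : ((X : ℂ[X]) ^ n - C (K ^ n)).roots
      = (Multiset.range n).map (fun j => ε ^ j * K) := hε.nthRoots_eq rfl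
  have hfull : (((Multiset.range n).map (fun j => ε ^ j * K)).map
      (fun a => (X : ℂ[X]) - C a)).prod = X ^ n - C (K ^ n) := by
    rw [← h1]
    exact prod_multiset_X_sub_C_of_monic_of_roots_card_eq
      (monic_X_pow_sub_C _ hn0)
      (by rw [h1, Multiset.card_map, Multiset.card_range, natDegree_X_pow_sub_C])
  rw [Multiset.map_map] at hfull
  have hcomp := congrArg (fun p => p.comp ((X : ℂ[X]) - C 1)) hfull
  simp only [multiset_prod_comp, Multiset.map_map, Function.comp, sub_comp, X_comp, C_comp,
    pow_comp] at hcomp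
  have hfun : (fun x => (X : ℂ[X]) - C 1 - C (ε ^ x * K))
      = fun j => (X : ℂ[X]) + C ((k : ℂ) * ε ^ j - 1) := by
    funext j
    simp only [hK, map_mul, map_sub, map_neg, map_one, map_natCast]
    ring
  rw [hfun] at hcomp
  obtain ⟨m, rfl⟩ : ∃ m, n = m + 1 := ⟨n - 1, by omega⟩
  rw [← Finset.range_val, ← Finset.prod_eq_multiset_prod, Finset.prod_range_succ'] at hcomp
  simp only [pow_zero, mul_one] at hcomp
  -- geometric sum identity
  have hg := geom_sum₂_mul ((X : ℂ[X]) - C 1) (C K) (m + 1)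
  have hfac : (X : ℂ[X]) - C 1 - C K = X + C ((k : ℂ) - 1) := by
    simp only [hK, map_neg, map_sub, map_one, map_natCast]
    ring
  rw [hfac] at hg
  have hne : (X : ℂ[X]) + C ((k : ℂ) - 1) ≠ 0 := X_add_C_ne_zero _
  have key : (∏ j ∈ Finset.range m, ((X : ℂ[X]) + C ((k : ℂ) * ε ^ (j + 1) - 1)))
      = ∑ i ∈ Finset.range (m + 1), ((X : ℂ[X]) - C 1) ^ i * C K ^ (m + 1 - 1 - i) := by
    apply mul_right_cancel₀ hne
    rw [hcomp, hg]
    rw [map_pow]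
  rw [Multiset.map_map, ← Finset.range_val, ← Finset.prod_eq_multiset_prod]
  rw [show (m + 1 - 1) = m from rfl]
  simp only [Function.comp]
  rw [show (m + 1 - 1) = m from rfl] at key
  rw [key]
  refine Finset.sum_congr rfl fun i _ => ?_
  rw [← C_pow]


open MvPolynomial

/-- For the nontrivial Kovalevskaya exponents `Λⱼ = k·εʲ - 1`,
`j = 1,…,n-1`, of the Jouanolou system (`ε` a primitive `n`-th root of unity), the
elementary symmetric polynomials satisfy
`τ_r(Λ) = (-1)^r · Σ_{i=0}^r C(n-i-1, r-i)·kⁱ` for `0 ≤ r ≤ n-1`; in particular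
`τ₁(Λ) = 1 - n - k` and `τ_{n-1}(Λ) = (-1)^{n-1}(kⁿ-1)/(k-1)`. -/
theorem jouanolou_esymm_of_exponents
    (n k : ℕ) (hn : 2 ≤ n) (hk : 2 ≤ k)
    (ε : ℂ) (hε : IsPrimitiveRoot ε n) :
    (∀ r : ℕ, r ≤ n - 1 →
      ((Multiset.range (n - 1)).map (fun j => (k : ℂ) * ε ^ (j + 1) - 1)).esymm r
        = (-1 : ℂ) ^ r *
          ∑ i ∈ Finset.range (r + 1), ((n - i - 1).choose (r - i) : ℂ) * (k : ℂ) ^ i) ∧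
    ((Multiset.range (n - 1)).map (fun j => (k : ℂ) * ε ^ (j + 1) - 1)).esymm 1
      = 1 - (n : ℂ) - (k : ℂ) ∧
    ((Multiset.range (n - 1)).map (fun j => (k : ℂ) * ε ^ (j + 1) - 1)).esymm (n - 1)
      = (-1 : ℂ) ^ (n - 1) * ((k : ℂ) ^ n - 1) / ((k : ℂ) - 1) := by
  classical
  have hgen : ∀ r : ℕ, r ≤ n - 1 →
      ((Multiset.range (n - 1)).map (fun j => (k : ℂ) * ε ^ (j + 1) - 1)).esymm r
        = (-1 : ℂ) ^ r *
          ∑ i ∈ Finset.range (r + 1), ((n - i - 1).choose (r - i) : ℂ) * (k : ℂ) ^ i := by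
    intro r hr
    have hcoeff := Multiset.prod_X_add_C_coeff
      ((Multiset.range (n - 1)).map (fun j => (k : ℂ) * ε ^ (j + 1) - 1))
      (k := n - 1 - r)
      (by rw [Multiset.card_map, Multiset.card_range]; omega)
    rw [Multiset.card_map, Multiset.card_range,
      show n - 1 - (n - 1 - r) = r by omega, jouanolou_aux_prod n k hn ε hε] at hcoeff
    rw [← hcoeff, Polynomial.finset_sum_coeff]
    have hterm : ∀ i, (((Polynomial.X : Polynomial ℂ) - Polynomial.C 1) ^ i *
        Polynomial.C ((-(k : ℂ)) ^ (n - 1 - i))).coeff (n - 1 - r)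
        = (-1 : ℂ) ^ (i - (n - 1 - r)) * (i.choose (n - 1 - r) : ℂ) * (-(k : ℂ)) ^ (n - 1 - i) := by
      intro i
      rw [Polynomial.coeff_mul_C,
        show (Polynomial.X : Polynomial ℂ) - Polynomial.C 1 = Polynomial.X + Polynomial.C (-1) by
          rw [map_neg, sub_eq_add_neg],
        Polynomial.coeff_X_add_C_pow]
    simp only [hterm]
    rw [← Finset.sum_range_reflect
      (fun i => (-1 : ℂ) ^ (i - (n - 1 - r)) * (i.choose (n - 1 - r) : ℂ) * (-(k : ℂ)) ^ (n - 1 - i))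
      n, Finset.mul_sum]
    rw [← Finset.sum_subset (Finset.range_subset_range.mpr (by omega : r + 1 ≤ n))
      (by
        intro j hj hj'
        simp only [Finset.mem_range] at hj hj'
        have : n - 1 - j < n - 1 - r := by omega
        simp [Nat.choose_eq_zero_of_lt this])]
    refine Finset.sum_congr rfl fun j hj => ?_
    simp only [Finset.mem_range] at hj
    have hj' : j ≤ r := by omega
    have e1 : n - 1 - (n - 1 - j) = j := by omega
    have e2 : n - 1 - j - (n - 1 - r) = r - j := by omega
    have e3 : (n - 1 - j).choose (n - 1 - r) = (n - j - 1).choose (r - j) := by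
      rw [show n - 1 - j = n - j - 1 by omega,
        ← Nat.choose_symm (by omega : r - j ≤ n - j - 1),
        show n - j - 1 - (r - j) = n - 1 - r by omega]
    rw [e1, e2, e3, neg_pow]
    have hs : (-1 : ℂ) ^ (r - j) * (-1 : ℂ) ^ j = (-1) ^ r := by
      rw [← pow_add]; congr 1; omega
    linear_combination (((n - j - 1).choose (r - j) : ℂ) * (k : ℂ) ^ j) * hs
  refine ⟨hgen, ?_, ?_⟩
  · rw [hgen 1 (by omega)]
    rw [Finset.sum_range_succ, Finset.sum_range_succ, Finset.sum_range_zero]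
    simp only [Nat.sub_zero, Nat.sub_self, Nat.choose_one_right, Nat.choose_zero_right, pow_zero,
      pow_one, Nat.cast_one, zero_add, mul_one, one_mul]
    rw [Nat.cast_sub (by omega : 1 ≤ n)]
    push_cast
    ring
  · rw [hgen (n - 1) le_rfl, show n - 1 + 1 = n by omega]
    have : ∀ i ∈ Finset.range n, ((n - i - 1).choose (n - 1 - i) : ℂ) * (k : ℂ) ^ i
        = (k : ℂ) ^ i := by
      intro i hi
      rw [show n - i - 1 = n - 1 - i by omega, Nat.choose_self, Nat.cast_one, one_mul]
    rw [Finset.sum_congr rfl this, geom_sum_eq (by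
      intro h
      rw [show (1 : ℂ) = ((1 : ℕ) : ℂ) by norm_num, Nat.cast_inj] at h
      omega) n, mul_div_assoc]
end

section
/- Let n ≥ 2, let k ≥ 2 be an integer, let ε ∈ ℂ be a primitive n-th root of unity, and let Λ = (Λ₁,…,Λ_{n−1}) with Λⱼ = k·ε^{j} − 1 (the common nontrivial Kovalevskaya exponents at each of the D(n,k) = (kⁿ−1)/(k−1) Darboux points of the n-dimensional Jouanolou system of degree k). Then for every 0 ≤ r ≤ n−1, D(n,k) · τ₁(Λ)^r / τ_{n−1}(Λ) = (−1)^{n−1}·(1−n−k)^r. (This is the universal value R(τ₁^r, n, k) of the Darboux-point sum Σ_d τ₁(Λ(d))^r/τ_{n−1}(Λ(d)).) -/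
open MvPolynomial

lemma my_powersetCard_card (α : Type*) (s : Multiset α) :
    s.powersetCard (Multiset.card s) = {s} := by
  induction s using Multiset.induction with
  | empty => simp
  | cons a s ih =>
    rw [Multiset.card_cons, Multiset.powersetCard_cons,
      Multiset.powersetCard_eq_empty _ (Nat.lt_succ_self _), ih]
    simp

lemma my_esymm_card {R : Type*} [CommSemiring R] (s : Multiset R) :
    s.esymm (Multiset.card s) = s.prod := by
  rw [Multiset.esymm, my_powersetCard_card]
  simp

lemma my_esymm_one {R : Type*} [CommSemiring R] (s : Multiset R) :
    s.esymm 1 = s.sum := by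
  rw [Multiset.esymm, Multiset.powersetCard_one, Multiset.map_map]
  simp

/-- With `Λⱼ = k·εʲ - 1`, `j = 1,…,n-1`, the common nontrivial
Kovalevskaya exponents at each of the `D(n,k) = (kⁿ-1)/(k-1)` Darboux points of the
Jouanolou system, for every `0 ≤ r ≤ n-1` one has
`D(n,k)·τ₁(Λ)^r / τ_{n-1}(Λ) = (-1)^{n-1}·(1-n-k)^r`, the universal value
`R(τ₁^r, n, k)`. -/
theorem jouanolou_R_tau1_pow
    (n k : ℕ) (hn : 2 ≤ n) (hk : 2 ≤ k)
    (ε : ℂ) (hε : IsPrimitiveRoot ε n)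
    (Λ : Multiset ℂ)
    (hΛ : Λ = (Multiset.range (n - 1)).map (fun j => (k : ℂ) * ε ^ (j + 1) - 1)) :
    ∀ r : ℕ, r ≤ n - 1 →
      (((k : ℂ) ^ n - 1) / ((k : ℂ) - 1)) * (Λ.esymm 1) ^ r / Λ.esymm (n - 1)
        = (-1 : ℂ) ^ (n - 1) * (1 - (n : ℂ) - (k : ℂ)) ^ r := by
  intro r _
  obtain ⟨m, rfl⟩ : ∃ m, n = m + 1 := ⟨n - 1, (Nat.succ_pred_eq_of_pos (by omega)).symm⟩
  have hm1 : m + 1 - 1 = m := rfl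
  have hcard : Multiset.card Λ = m := by simp [hΛ, hm1]
  -- nonvanishing facts
  have hk1 : ((k : ℂ) - 1) ≠ 0 := by
    intro h
    have : (k : ℂ) = 1 := by linear_combination h
    have : (k : ℕ) = 1 := by exact_mod_cast this
    omega
  have hkn : ((k : ℂ) ^ (m + 1) - 1) ≠ 0 := by
    intro h
    have h2 : ((k ^ (m + 1) : ℕ) : ℂ) = 1 := by push_cast; linear_combination h
    have : (k ^ (m + 1) : ℕ) = 1 := by exact_mod_cast h2
    have : 2 ^ (m + 1) ≤ k ^ (m + 1) := Nat.pow_le_pow_left hk _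
    have : 2 ≤ 2 ^ (m + 1) := Nat.le_self_pow (by omega) 2 |>.trans_eq rfl
    omega
  -- the sum
  have hsum : Λ.esymm 1 = 1 - ((m + 1 : ℕ) : ℂ) - (k : ℂ) := by
    rw [my_esymm_one, hΛ, hm1]
    have : Multiset.sum ((Multiset.range m).map (fun j => (k : ℂ) * ε ^ (j + 1) - 1))
        = ∑ j ∈ Finset.range m, ((k : ℂ) * ε ^ (j + 1) - 1) := rfl
    rw [this, Finset.sum_sub_distrib, ← Finset.mul_sum]
    have hgeom : ∑ j ∈ Finset.range (m + 1), ε ^ j = 0 :=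
      hε.geom_sum_eq_zero (by omega)
    rw [Finset.sum_range_succ', pow_zero] at hgeom
    have hpow : ∑ j ∈ Finset.range m, ε ^ (j + 1) = -1 := by
      linear_combination hgeom
    rw [hpow, Finset.sum_const, Finset.card_range, nsmul_eq_mul, mul_one]
    push_cast
    ring
  -- the product
  have hprod : Λ.esymm (m + 1 - 1)
      = (-1 : ℂ) ^ m * (((k : ℂ) ^ (m + 1) - 1) / ((k : ℂ) - 1)) := by
    have hec := my_esymm_card Λ
    rw [hcard] at hec
    rw [hm1, hec, hΛ, hm1]
    have hP : Multiset.prod ((Multiset.range m).map (fun j => (k : ℂ) * ε ^ (j + 1) - 1))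
        = ∏ j ∈ Finset.range m, ((k : ℂ) * ε ^ (j + 1) - 1) := rfl
    rw [hP]
    have hpoly := X_pow_sub_C_eq_prod (R := ℂ) hε (Nat.succ_pos m)
      (rfl : (k : ℂ) ^ (m + 1) = (k : ℂ) ^ (m + 1))
    have heval := congrArg (Polynomial.eval 1) hpoly
    simp only [Polynomial.eval_sub, Polynomial.eval_pow, Polynomial.eval_X,
      Polynomial.eval_C, Polynomial.eval_prod, one_pow, Polynomial.eval_one] at heval
    rw [Finset.prod_range_succ'] at heval
    simp only [pow_zero, one_mul] at heval
    -- heval : 1 - k^(m+1) = (∏ i ∈ range m, (1 - ε^(i+1) * k)) * (1 - k)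
    have hQ : ∏ j ∈ Finset.range m, ((k : ℂ) * ε ^ (j + 1) - 1)
        = (-1 : ℂ) ^ m * ∏ j ∈ Finset.range m, (1 - ε ^ (j + 1) * (k : ℂ)) := by
      rw [show ((-1 : ℂ)) ^ m = ∏ _j ∈ Finset.range m, (-1 : ℂ) by
        simp, ← Finset.prod_mul_distrib]
      exact Finset.prod_congr rfl fun j _ => by ring
    rw [hQ]
    have h1k : (1 : ℂ) - k ≠ 0 := by
      intro h; apply hk1; linear_combination -h
    have hPr : ∏ j ∈ Finset.range m, (1 - ε ^ (j + 1) * (k : ℂ))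
        = (1 - (k : ℂ) ^ (m + 1)) / (1 - (k : ℂ)) := by
      rw [eq_div_iff h1k]
      linear_combination -heval
    rw [hPr]
    congr 1
    rw [div_eq_div_iff h1k hk1]
    ring
  rw [hprod, hsum, hm1]
  have hD : ((k : ℂ) ^ (m + 1) - 1) / ((k : ℂ) - 1) ≠ 0 :=
    div_ne_zero hkn hk1
  have hneg : ((-1 : ℂ)) ^ m ≠ 0 := pow_ne_zero _ (by norm_num)
  rw [div_eq_iff (mul_ne_zero hneg hD)]
  have hsq : ((-1 : ℂ)) ^ m * (-1) ^ m = 1 := by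
    rw [← pow_add, ← two_mul, pow_mul]
    norm_num
  linear_combination (-( ((k : ℂ) ^ (m + 1) - 1) / ((k : ℂ) - 1)
      * (1 - ((m + 1 : ℕ) : ℂ) - (k : ℂ)) ^ r)) * hsq
end

section
/- Let n ≥ 2, let k ≥ 2 be an integer, let ε ∈ ℂ be a primitive n-th root of unity, and let Λ = (Λ₁,…,Λ_{n−1}) with Λⱼ = k·ε^{j} − 1 (the common nontrivial Kovalevskaya exponents at each of the D(n,k) = (kⁿ−1)/(k−1) Darboux points of the n-dimensional Jouanolou system of degree k). Then for every 0 ≤ r ≤ n−1, D(n,k) · τ_r(Λ) / τ_{n−1}(Λ) = (−1)^{r+1−n} · Σ_{i=0}^{r} C(n−i−1, r−i) · k^{i}. (This is the universal value R(τ_r, n, k); for r = n−2 it equals −(kⁿ − n(k−1) − 1)/(k−1)².) -/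
open MvPolynomial

lemma jouanolou_esymm_formula
    (n k : ℕ) (hn : 2 ≤ n) (hk : 2 ≤ k)
    (ε : ℂ) (hε : IsPrimitiveRoot ε n)
    (r : ℕ) (hr : r ≤ n - 1) :
    ((Multiset.range (n - 1)).map (fun j => (k : ℂ) * ε ^ (j + 1) - 1)).esymm r
      = (-1 : ℂ) ^ r *
        ∑ i ∈ Finset.range (r + 1), ((n - i - 1).choose (r - i) : ℂ) * (k : ℂ) ^ i := by
  set K : ℂ := (k : ℂ) with hKdef
  have hn1 : n - 1 + 1 = n := by omega
  -- big factorization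
  have hbig : (Polynomial.X ^ n - Polynomial.C (K ^ n) : Polynomial ℂ) = ∏ i ∈ Finset.range n, (Polynomial.X - Polynomial.C (ε ^ i * K)) :=
    X_pow_sub_C_eq_prod hε (by omega) rfl
  -- peel off the i = 0 factor
  have hQmul : (∏ j ∈ Finset.range (n - 1), (Polynomial.X - Polynomial.C (ε ^ (j + 1) * K))) * (Polynomial.X - Polynomial.C K)
      = Polynomial.X ^ n - Polynomial.C (K ^ n) := by
    have h := Finset.prod_range_succ' (fun i => (Polynomial.X - Polynomial.C (ε ^ i * K) : Polynomial ℂ)) (n - 1)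
    rw [hn1] at h
    rw [hbig, h]
    simp
  -- geometric polynomial identity
  have hgeom : (∑ m ∈ Finset.range n, Polynomial.C (K ^ (n - 1 - m)) * Polynomial.X ^ m : Polynomial ℂ) * (Polynomial.X - Polynomial.C K)
      = Polynomial.X ^ n - Polynomial.C (K ^ n) := by
    have h := geom_sum₂_mul (Polynomial.X : Polynomial ℂ) (Polynomial.C K) n
    calc (∑ m ∈ Finset.range n, Polynomial.C (K ^ (n - 1 - m)) * Polynomial.X ^ m : Polynomial ℂ) * (Polynomial.X - Polynomial.C K)
        = (∑ i ∈ Finset.range n, Polynomial.X ^ i * Polynomial.C K ^ (n - 1 - i)) * (Polynomial.X - Polynomial.C K) := by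
          congr 1
          refine Finset.sum_congr rfl fun m _ => ?_
          rw [Polynomial.C_pow, mul_comm]
      _ = Polynomial.X ^ n - Polynomial.C K ^ n := h
      _ = Polynomial.X ^ n - Polynomial.C (K ^ n) := by rw [Polynomial.C_pow]
  have hQ : (∏ j ∈ Finset.range (n - 1), (Polynomial.X - Polynomial.C (ε ^ (j + 1) * K)))
      = ∑ m ∈ Finset.range n, Polynomial.C (K ^ (n - 1 - m)) * Polynomial.X ^ m :=
    mul_right_cancel₀ (Polynomial.X_sub_C_ne_zero K) (hQmul.trans hgeom.symm)
  -- shift Polynomial.X ↦ Polynomial.X + 1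
  have hP : (∏ j ∈ Finset.range (n - 1), (Polynomial.X - Polynomial.C (K * ε ^ (j + 1) - 1)))
      = ∑ m ∈ Finset.range n, Polynomial.C (K ^ (n - 1 - m)) * (Polynomial.X + 1) ^ m := by
    calc ∏ j ∈ Finset.range (n - 1), ((Polynomial.X : Polynomial ℂ) - Polynomial.C (K * ε ^ (j + 1) - 1))
        = (∏ j ∈ Finset.range (n - 1), (Polynomial.X - Polynomial.C (ε ^ (j + 1) * K))).comp (Polynomial.X + 1) := by
          rw [Polynomial.prod_comp]
          refine Finset.prod_congr rfl fun j _ => ?_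
          simp only [Polynomial.sub_comp, Polynomial.X_comp, Polynomial.C_comp, Polynomial.mul_comp, map_sub, map_mul, map_one]
          ring
      _ = (∑ m ∈ Finset.range n, Polynomial.C (K ^ (n - 1 - m)) * Polynomial.X ^ m).comp (Polynomial.X + 1) := by rw [hQ]
      _ = ∑ m ∈ Finset.range n, Polynomial.C (K ^ (n - 1 - m)) * (Polynomial.X + 1) ^ m := by
          simp [Polynomial.eval₂_finset_sum, Polynomial.mul_comp, Polynomial.pow_comp]
  -- the multiset product equals the finset product
  set Λ : Multiset ℂ := (Multiset.range (n - 1)).map (fun j => K * ε ^ (j + 1) - 1) with hΛdef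
  have hcard : Multiset.card Λ = n - 1 := by simp [hΛdef]
  have hprodeq : (Λ.map fun t => (Polynomial.X : Polynomial ℂ) - Polynomial.C t).prod
      = ∏ j ∈ Finset.range (n - 1), (Polynomial.X - Polynomial.C (K * ε ^ (j + 1) - 1)) := by
    rw [hΛdef, Multiset.map_map]
    rfl
  have hco := Multiset.prod_X_sub_C_coeff Λ (show n - 1 - r ≤ Multiset.card Λ by omega)
  rw [hcard] at hco
  have hrr : n - 1 - (n - 1 - r) = r := by omega
  rw [hrr, hprodeq, hP] at hco
  -- compute the coefficient of the explicit sum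
  have hcoeff : (∑ m ∈ Finset.range n, Polynomial.C (K ^ (n - 1 - m)) * (Polynomial.X + 1) ^ m : Polynomial ℂ).coeff (n - 1 - r)
      = ∑ m ∈ Finset.range n, K ^ (n - 1 - m) * (m.choose (n - 1 - r) : ℂ) := by
    rw [Polynomial.finset_sum_coeff]
    refine Finset.sum_congr rfl fun m _ => ?_
    rw [Polynomial.coeff_C_mul, Polynomial.coeff_X_add_one_pow]
  rw [hcoeff] at hco
  -- sum manipulation
  have hsum : ∑ m ∈ Finset.range n, K ^ (n - 1 - m) * (m.choose (n - 1 - r) : ℂ)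
      = ∑ i ∈ Finset.range (r + 1), ((n - i - 1).choose (r - i) : ℂ) * K ^ i := by
    rw [← Finset.sum_range_reflect (fun m => K ^ (n - 1 - m) * (m.choose (n - 1 - r) : ℂ)) n]
    rw [← Finset.sum_subset (Finset.range_subset_range.2 (show r + 1 ≤ n by omega))
      (fun j hjn hj => by
        have hjn' : j < n := by simpa using hjn
        have hjr : r < j := by simpa using hj
        have : (n - 1 - j).choose (n - 1 - r) = 0 :=
          Nat.choose_eq_zero_of_lt (by omega)
        simp [this])]
    refine Finset.sum_congr rfl fun j hj => ?_
    have hjr : j ≤ r := by simpa [Nat.lt_succ_iff] using hj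
    have h1 : n - 1 - (n - 1 - j) = j := by omega
    have h2 : n - 1 - j = n - j - 1 := by omega
    have h3 : (n - j - 1).choose (n - 1 - r) = (n - j - 1).choose (r - j) := by
      rw [← Nat.choose_symm (show r - j ≤ n - j - 1 by omega)]
      congr 1
      omega
    rw [h1, h2, h3, mul_comm]
  rw [hsum] at hco
  have hsq : ((-1 : ℂ)) ^ r * (-1) ^ r = 1 := by
    rw [← pow_add]
    exact Even.neg_one_pow ⟨r, by ring⟩
  linear_combination (-((-1 : ℂ) ^ r)) * hco - Λ.esymm r * hsq

/-- With `Λⱼ = k·εʲ - 1`, `j = 1,…,n-1`, the common nontrivial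
Kovalevskaya exponents at each of the `D(n,k) = (kⁿ-1)/(k-1)` Darboux points of the
Jouanolou system, for every `0 ≤ r ≤ n-1` one has
`D(n,k)·τ_r(Λ) / τ_{n-1}(Λ) = (-1)^{r+1-n} · Σ_{i=0}^r C(n-i-1, r-i)·kⁱ`, the
universal value `R(τ_r, n, k)`. -/
theorem jouanolou_R_tau_r
    (n k : ℕ) (hn : 2 ≤ n) (hk : 2 ≤ k)
    (ε : ℂ) (hε : IsPrimitiveRoot ε n)
    (Λ : Multiset ℂ)
    (hΛ : Λ = (Multiset.range (n - 1)).map (fun j => (k : ℂ) * ε ^ (j + 1) - 1)) :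
    ∀ r : ℕ, r ≤ n - 1 →
      (((k : ℂ) ^ n - 1) / ((k : ℂ) - 1)) * Λ.esymm r / Λ.esymm (n - 1)
        = (-1 : ℂ) ^ ((r : ℤ) + 1 - (n : ℤ)) *
          ∑ i ∈ Finset.range (r + 1), ((n - i - 1).choose (r - i) : ℂ) * (k : ℂ) ^ i := by
  intro r hr
  subst hΛ
  have hn1 : n - 1 + 1 = n := by omega
  have h1 := jouanolou_esymm_formula n k hn hk ε hε r hr
  have h2 := jouanolou_esymm_formula n k hn hk ε hε (n - 1) le_rfl
  have h2' : ((Multiset.range (n - 1)).map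
      (fun j => (k : ℂ) * ε ^ (j + 1) - 1)).esymm (n - 1)
      = (-1 : ℂ) ^ (n - 1) * ∑ i ∈ Finset.range n, (k : ℂ) ^ i := by
    rw [h2, hn1]
    congr 1
    refine Finset.sum_congr rfl fun i hi => ?_
    have hi' : i < n := Finset.mem_range.1 hi
    have : (n - i - 1).choose (n - 1 - i) = 1 := by
      have : n - i - 1 = n - 1 - i := by omega
      rw [this, Nat.choose_self]
    rw [this]
    simp
  have hkne1 : (k : ℂ) ≠ 1 := by
    intro h
    have : (k : ℂ) = ((1 : ℕ) : ℂ) := by simpa using h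
    have := Nat.cast_injective (R := ℂ) this
    omega
  have hgeo : ∑ i ∈ Finset.range n, (k : ℂ) ^ i = ((k : ℂ) ^ n - 1) / ((k : ℂ) - 1) :=
    geom_sum_eq hkne1 n
  have hS0 : (∑ i ∈ Finset.range n, (k : ℂ) ^ i) ≠ 0 := by
    rw [hgeo]
    apply div_ne_zero
    · rw [sub_ne_zero]
      intro h
      have h' : ((k ^ n : ℕ) : ℂ) = ((1 : ℕ) : ℂ) := by push_cast; simpa using h
      have := Nat.cast_injective (R := ℂ) h'
      have : 1 < k ^ n := Nat.one_lt_pow (by omega) (by omega)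
      omega
    · rwa [sub_ne_zero]
  have hz : (-1 : ℂ) ^ ((r : ℤ) + 1 - (n : ℤ)) = (-1) ^ r * (-1) ^ (n - 1) := by
    have he : (r : ℤ) + 1 - (n : ℤ) = (r : ℤ) - ((n - 1 : ℕ) : ℤ) := by
      rw [Nat.cast_sub (by omega)]
      push_cast
      ring
    rw [he, zpow_sub₀ (by norm_num : (-1:ℂ) ≠ 0), zpow_natCast, zpow_natCast, div_eq_mul_inv,
      ← inv_pow, inv_neg, inv_one]
  rw [h1, h2', ← hgeo, hz]
  rw [div_eq_iff (mul_ne_zero (pow_ne_zero _ (by norm_num : (-1:ℂ) ≠ 0)) hS0)]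
  have hsq : ((-1 : ℂ)) ^ (n - 1) * (-1) ^ (n - 1) = 1 := by
    rw [← pow_add]
    exact Even.neg_one_pow ⟨n - 1, by ring⟩
  set S := ∑ i ∈ Finset.range (r + 1), ((n - i - 1).choose (r - i) : ℂ) * (k : ℂ) ^ i
  set G := ∑ i ∈ Finset.range n, (k : ℂ) ^ i
  linear_combination (-((-1 : ℂ) ^ r * S * G)) * hsq
end

section
/- Let S ⊆ ℝ \ {0} be a set of nonzero real numbers such that (i) S ⊆ (−∞,−1] ∪ (0,∞), and (ii) the only possible accumulation point of S is 0 (i.e. S ∩ ((−∞,−δ] ∪ [δ,∞)) is finite for every δ > 0; in particular S has only finitely many negative elements). Then for every c ∈ ℝ and every m ∈ ℕ, the set of m-tuples (X₁,…,X_m) ∈ S^m satisfying X₁ + ⋯ + X_m = c is finite. -/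
/-- If `S` is a set of nonzero reals with `S ⊆ (-∞,-1] ∪ (0,∞)` whose
only possible accumulation point is `0` (i.e. `S ∩ ((-∞,-δ] ∪ [δ,∞))` is finite for
every `δ > 0`), then for every `c ∈ ℝ` and `m ∈ ℕ` the set of `m`-tuples with entries
in `S` summing to `c` is finite. -/
theorem finitely_many_tuples_mixed
    (S : Set ℝ) (hS : S ⊆ Set.Iic (-1) ∪ Set.Ioi 0)
    (hacc : ∀ δ : ℝ, 0 < δ → (S ∩ (Set.Iic (-δ) ∪ Set.Ici δ)).Finite) :
    ∀ (c : ℝ) (m : ℕ),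
      {X : Fin m → ℝ | (∀ i, X i ∈ S) ∧ ∑ i, X i = c}.Finite := by
  intro c m
  induction m generalizing c with
  | zero => exact Set.subsingleton_of_subsingleton.finite
  | succ m IH =>
    set δ : ℝ := if 0 < c then c / (m + 1) else 1 with hδdef
    have hδpos : 0 < δ := by
      rw [hδdef]; split
      · positivity
      · norm_num
    set δ' : ℝ := min δ 1 with hδ'def
    have hδ'pos : 0 < δ' := lt_min hδpos one_pos
    have hGfin : (S ∩ (Set.Iic (-1) ∪ Set.Ici δ)).Finite := by
      apply (hacc δ' hδ'pos).subset
      intro x ⟨hxS, hx⟩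
      refine ⟨hxS, ?_⟩
      rcases hx with h | h
      · left
        simp only [Set.mem_Iic] at h ⊢
        have := min_le_right δ 1
        linarith
      · right; exact le_trans (min_le_left δ 1) h
    set G := S ∩ (Set.Iic (-1) ∪ Set.Ici δ) with hG
    -- every tuple in the set has some coordinate in G
    have key : ∀ X : Fin (m+1) → ℝ, (∀ i, X i ∈ S) → (∑ i, X i = c) →
        ∃ i, X i ∈ G := by
      intro X hXS hXsum
      by_cases hneg : ∃ i, X i ≤ -1
      · obtain ⟨i, hi⟩ := hneg
        exact ⟨i, hXS i, Or.inl hi⟩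
      · push_neg at hneg
        have hpos : ∀ i, 0 < X i := by
          intro i
          rcases hS (hXS i) with h | h
          · exact absurd h (not_le.mpr (hneg i))
          · exact h
        have hcpos : 0 < c := by
          rw [← hXsum]
          exact Finset.sum_pos (fun i _ => hpos i) ⟨0, Finset.mem_univ 0⟩
        have hδeq : δ = c / (m + 1) := by rw [hδdef, if_pos hcpos]
        by_contra hcon
        push_neg at hcon
        have hlt : ∀ i : Fin (m+1), X i < δ := by
          intro i
          have := hcon i
          rw [hG] at this
          simp only [Set.mem_inter_iff, Set.mem_union, Set.mem_Iic, Set.mem_Ici] at this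
          push_neg at this
          exact (this (hXS i)).2
        have : ∑ i, X i < ∑ _i : Fin (m+1), δ :=
          Finset.sum_lt_sum_of_nonempty Finset.univ_nonempty (fun i _ => hlt i)
        rw [hXsum, Finset.sum_const, Finset.card_univ, Fintype.card_fin, hδeq] at this
        have : c < c := by
          calc c < (m+1 : ℕ) • (c / (m+1)) := this
            _ = c := by rw [nsmul_eq_mul]; push_cast; field_simp
        exact lt_irrefl c this
    -- cover by finite union
    apply Set.Finite.subset
      (Set.Finite.biUnion (Set.finite_univ : (Set.univ : Set (Fin (m+1))).Finite)
        (fun i _ => Set.Finite.biUnion hGfin (fun x _ =>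
          (Set.Finite.of_finite_image (f := fun X => i.removeNth X)
            ((IH (c - x)).subset ?_) ?_ : ({X : Fin (m+1) → ℝ |
            X i = x ∧ (∀ j, X j ∈ S) ∧ ∑ j, X j = c}).Finite))))
    · intro X ⟨hXS, hXsum⟩
      obtain ⟨i, hi⟩ := key X hXS hXsum
      exact Set.mem_biUnion (Set.mem_univ i) (Set.mem_biUnion hi ⟨rfl, hXS, hXsum⟩)
    · -- image of removeNth lands in the IH set
      intro Y hY
      obtain ⟨X, ⟨hXi, hXS, hXsum⟩, rfl⟩ := hY
      refine ⟨fun j => hXS _, ?_⟩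
      have := Fin.sum_univ_succAbove X i
      simp only [Fin.removeNth]
      rw [← hXsum, this, hXi]; ring
    · -- injectivity on the set
      intro X ⟨hXi, _⟩ Y ⟨hYi, _⟩ h
      have hX := Fin.insertNth_self_removeNth (p := i) (f := X)
      have hY' := Fin.insertNth_self_removeNth (p := i) (f := Y)
      have h' : i.removeNth X = i.removeNth Y := h
      rw [← hX, ← hY', h', hXi, hYi]
end

section
/- Fix an integer k > 2 and let L_k = ({ (k/2)·p(p−1) + p − 1 : p ∈ ℤ } ∪ { (k−1)/(2k) + p(p+1)·k/2 − 1 : p ∈ ℤ }) \ {0} ⊂ ℚ (the set of nonzero Kovalevskaya exponents Λ = λ − 1 allowed by the first two families of the Morales–Ramis table). Then every element of L_k lies in [−1,0) ∪ (0,∞), and for every c ∈ ℝ and every m ∈ ℕ the set of m-tuples (Λ₁,…,Λ_m) ∈ L_k^m satisfying Σ_{j=1}^{m} 1/Λⱼ = c is finite. -/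
/-- Egyptian-fraction-style finiteness: tuples of nonzero integers bounded below,
with fixed sum of reciprocals, form a finite set. -/
lemma egypt_finite (B : ℤ) : ∀ (m : ℕ) (c : ℝ),
    {n : Fin m → ℤ | (∀ j, n j ≠ 0 ∧ -B ≤ n j) ∧ ∑ j, (1:ℝ)/(n j : ℝ) = c}.Finite := by
  intro m
  induction m with
  | zero => intro c; exact Set.toFinite _
  | succ m ih =>
    intro c
    set M : ℤ := max B (max 1 ⌈((m:ℝ)+1)/c⌉) with hMdef
    have hM1 : (1:ℤ) ≤ M := le_trans (le_max_left 1 _) (le_max_right B _)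
    have hcover : {n : Fin (m+1) → ℤ |
        (∀ j, n j ≠ 0 ∧ -B ≤ n j) ∧ ∑ j, (1:ℝ)/(n j : ℝ) = c} ⊆
        ⋃ (j : Fin (m+1)), ⋃ (v ∈ Finset.Icc (-M) M),
          (fun g => Fin.insertNth j v g) ''
            {g : Fin m → ℤ | (∀ i, g i ≠ 0 ∧ -B ≤ g i) ∧
              ∑ i, (1:ℝ)/(g i : ℝ) = c - 1/(v:ℝ)} := by
      intro n hn
      obtain ⟨hprop, hsum⟩ := hn
      obtain ⟨j, -, hjmin⟩ := Finset.exists_min_image Finset.univ n ⟨0, Finset.mem_univ 0⟩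
      have hjmin' : ∀ i, n j ≤ n i := fun i => hjmin i (Finset.mem_univ i)
      -- the minimal entry is bounded
      have hjmem : n j ∈ Finset.Icc (-M) M := by
        rcases lt_or_gt_of_ne (hprop j).1 with hneg | hpos
        · refine Finset.mem_Icc.2 ⟨le_trans (neg_le_neg (le_max_left B _)) (hprop j).2, ?_⟩
          exact le_trans hneg.le (le_trans zero_le_one hM1)
        · -- all entries positive
          have hall : ∀ i, (0:ℤ) < n i := fun i => lt_of_lt_of_le hpos (hjmin' i)
          have hterm : ∀ i, (0:ℝ) < 1/(n i : ℝ) := by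
            intro i
            have : (0:ℝ) < (n i : ℝ) := by exact_mod_cast hall i
            positivity
          have hcpos : (0:ℝ) < c := by
            rw [← hsum]
            exact Finset.sum_pos (fun i _ => hterm i) ⟨0, Finset.mem_univ 0⟩
          have hle : ∀ i, (1:ℝ)/(n i : ℝ) ≤ 1/(n j : ℝ) := by
            intro i
            apply one_div_le_one_div_of_le
            · exact_mod_cast hpos
            · exact_mod_cast hjmin' i
          have hsum_le : c ≤ ((m:ℝ)+1) * (1/(n j : ℝ)) := by
            calc c = ∑ i, (1:ℝ)/(n i : ℝ) := hsum.symm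
            _ ≤ ∑ _i : Fin (m+1), (1:ℝ)/(n j : ℝ) :=
                Finset.sum_le_sum (fun i _ => hle i)
            _ = ((m:ℝ)+1) * (1/(n j : ℝ)) := by
                simp [Finset.sum_const, mul_comm]
          have hnjpos : (0:ℝ) < (n j : ℝ) := by exact_mod_cast hpos
          have hbound : (n j : ℝ) ≤ ((m:ℝ)+1)/c := by
            rw [le_div_iff₀ hcpos]
            have := mul_le_mul_of_nonneg_right hsum_le hnjpos.le
            calc (n j : ℝ) * c = c * (n j : ℝ) := by ring
            _ ≤ ((m:ℝ)+1) * (1/(n j : ℝ)) * (n j : ℝ) := this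
            _ = (m:ℝ)+1 := by field_simp
          have : (n j : ℝ) ≤ (⌈((m:ℝ)+1)/c⌉ : ℤ) := le_trans hbound (Int.le_ceil _)
          have hnjM : n j ≤ M := by
            have h1 : n j ≤ ⌈((m:ℝ)+1)/c⌉ := by exact_mod_cast this
            exact le_trans h1 (le_trans (le_max_right 1 _) (le_max_right B _))
          refine Finset.mem_Icc.2 ⟨?_, hnjM⟩
          exact le_trans (by linarith : -M ≤ (0:ℤ)) hpos.le
      refine Set.mem_iUnion.2 ⟨j, Set.mem_iUnion.2 ⟨n j, Set.mem_iUnion.2 ⟨hjmem, ?_⟩⟩⟩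
      refine ⟨Fin.removeNth j n, ⟨?_, ?_⟩, Fin.insertNth_self_removeNth j n⟩
      · intro i; exact hprop (j.succAbove i)
      · have hdec : ∑ i, (1:ℝ)/(n i : ℝ)
            = 1/(n j : ℝ) + ∑ i : Fin m, (1:ℝ)/(n (j.succAbove i) : ℝ) :=
          Fin.sum_univ_succAbove (fun i => (1:ℝ)/(n i : ℝ)) j
        have : ∑ i : Fin m, (1:ℝ)/(n (j.succAbove i) : ℝ) = c - 1/(n j : ℝ) := by
          rw [← hsum, hdec]; ring
        simpa [Fin.removeNth] using this
    refine Set.Finite.subset ?_ hcover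
    refine Set.finite_iUnion (fun j => ?_)
    refine Set.Finite.biUnion (Finset.Icc (-M) M).finite_toSet (fun v _ => ?_)
    exact ((ih (c - 1/(v:ℝ))).image _)

/-- Every element of the two Morales–Ramis families is `≥ -1` and becomes an
integer after multiplication by `2k`. -/
lemma mem_families (k : ℕ) (hk : 2 < k) (x : ℚ)
    (hx : x ∈ ({x : ℚ | ∃ p : ℤ, x = (k : ℚ) / 2 * (p * (p - 1)) + p - 1} ∪
          {x : ℚ | ∃ p : ℤ, x = ((k : ℚ) - 1) / (2 * k) + p * (p + 1) * (k : ℚ) / 2 - 1})) :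
    -1 ≤ x ∧ ∃ z : ℤ, (z : ℚ) = 2 * k * x := by
  have hk3 : (3:ℚ) ≤ (k:ℚ) := by exact_mod_cast hk
  have hk0 : (k:ℚ) ≠ 0 := by positivity
  rcases hx with ⟨p, rfl⟩ | ⟨p, rfl⟩
  · have hA : (0:ℚ) ≤ (p:ℚ) * ((p:ℚ) - 1) := by
      have : (0:ℤ) ≤ p * (p - 1) := by
        rcases le_or_gt p 0 with h | h <;> nlinarith
      exact_mod_cast this
    have hB : (0:ℚ) ≤ (p:ℚ) * ((p:ℚ) + 1) := by
      have : (0:ℤ) ≤ p * (p + 1) := by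
        rcases le_or_gt p (-1) with h | h <;> nlinarith
      exact_mod_cast this
    constructor
    · nlinarith [hA, hB, hk3]
    · exact ⟨(k:ℤ) * k * (p * (p-1)) + 2 * k * p - 2 * k, by push_cast; ring⟩
  · have hB : (0:ℚ) ≤ (p:ℚ) * ((p:ℚ) + 1) := by
      have : (0:ℤ) ≤ p * (p + 1) := by
        rcases le_or_gt p (-1) with h | h <;> nlinarith
      exact_mod_cast this
    constructor
    · have h1 : (0:ℚ) ≤ ((k:ℚ) - 1) / (2 * k) := div_nonneg (by linarith) (by positivity)
      nlinarith [hB, hk3, h1]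
    · refine ⟨(k:ℤ) - 1 + p * (p+1) * k * k - 2 * k, ?_⟩
      push_cast
      field_simp

/-- For a fixed integer `k > 2`, let `L_k ⊂ ℚ` be the set of nonzero
Kovalevskaya exponents `Λ = λ - 1` allowed by the first two families of the
Morales–Ramis table, i.e.
`L_k = ({ (k/2)p(p-1) + p - 1 : p ∈ ℤ } ∪ { (k-1)/(2k) + p(p+1)k/2 - 1 : p ∈ ℤ }) \ {0}`.
Then every element of `L_k` lies in `[-1,0) ∪ (0,∞)`, and for every `c ∈ ℝ` and
`m ∈ ℕ` the set of `m`-tuples `(Λ₁,…,Λ_m) ∈ L_k^m` with `Σⱼ 1/Λⱼ = c` is finite. -/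
theorem morales_ramis_exponents_finiteness (k : ℕ) (hk : 2 < k) :
    (∀ x ∈ (({x : ℚ | ∃ p : ℤ, x = (k : ℚ) / 2 * (p * (p - 1)) + p - 1} ∪
          {x : ℚ | ∃ p : ℤ, x = ((k : ℚ) - 1) / (2 * k) + p * (p + 1) * (k : ℚ) / 2 - 1})
          \ {0}),
        (-1 ≤ x ∧ x < 0) ∨ 0 < x) ∧
    ∀ (c : ℝ) (m : ℕ),
      {Λ : Fin m → ℚ |
        (∀ j, Λ j ∈ (({x : ℚ | ∃ p : ℤ, x = (k : ℚ) / 2 * (p * (p - 1)) + p - 1} ∪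
          {x : ℚ | ∃ p : ℤ, x = ((k : ℚ) - 1) / (2 * k) + p * (p + 1) * (k : ℚ) / 2 - 1})
          \ {0})) ∧
        ∑ j, (1 : ℝ) / (Λ j : ℝ) = c}.Finite := by
  have hk0 : (k:ℚ) ≠ 0 := by positivity
  have hk0' : (2:ℚ) * k ≠ 0 := by positivity
  constructor
  · rintro x ⟨hx, hx0⟩
    have hne : x ≠ 0 := hx0
    have h1 := (mem_families k hk x hx).1
    rcases lt_or_gt_of_ne hne with h | h
    · exact Or.inl ⟨h1, h⟩
    · exact Or.inr h
  · intro c m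
    set S := {Λ : Fin m → ℚ |
        (∀ j, Λ j ∈ (({x : ℚ | ∃ p : ℤ, x = (k : ℚ) / 2 * (p * (p - 1)) + p - 1} ∪
          {x : ℚ | ∃ p : ℤ, x = ((k : ℚ) - 1) / (2 * k) + p * (p + 1) * (k : ℚ) / 2 - 1})
          \ {0})) ∧
        ∑ j, (1 : ℝ) / (Λ j : ℝ) = c} with hS
    -- key facts about members
    have hkey : ∀ Λ ∈ S, ∀ j : Fin m,
        ((2 * (k:ℚ) * Λ j).num : ℚ) = 2 * (k:ℚ) * Λ j ∧
        (2 * (k:ℚ) * Λ j).num ≠ 0 ∧ -(2 * (k:ℤ)) ≤ (2 * (k:ℚ) * Λ j).num := by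
      intro Λ hΛ j
      obtain ⟨hmem, hne⟩ := hΛ.1 j
      obtain ⟨hge, z, hz⟩ := mem_families k hk _ hmem
      have hnum : ((2 * (k:ℚ) * Λ j).num : ℚ) = 2 * (k:ℚ) * Λ j := by
        rw [← hz, Rat.num_intCast]
      refine ⟨hnum, ?_, ?_⟩
      · intro h0
        have : (2 * (k:ℚ) * Λ j) = 0 := by rw [← hnum, h0]; simp
        have : Λ j = 0 := by
          rcases mul_eq_zero.1 this with h | h
          · exact absurd h hk0'
          · exact h
        exact hne this
      · have : -(2 * (k:ℚ)) ≤ 2 * (k:ℚ) * Λ j := by nlinarith [hge]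
        have h2 : (-(2 * (k:ℤ)) : ℚ) ≤ ((2 * (k:ℚ) * Λ j).num : ℚ) := by
          rw [hnum]; push_cast; exact this
        exact_mod_cast h2
    -- injection into the integer tuples
    set Φ : (Fin m → ℚ) → (Fin m → ℤ) := fun Λ j => (2 * (k:ℚ) * Λ j).num with hΦ
    have himg : Φ '' S ⊆ {n : Fin m → ℤ | (∀ j, n j ≠ 0 ∧ -(2 * (k:ℤ)) ≤ n j) ∧
        ∑ j, (1:ℝ)/(n j : ℝ) = c / (2 * k)} := by
      rintro _ ⟨Λ, hΛ, rfl⟩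
      refine ⟨fun j => ⟨(hkey Λ hΛ j).2.1, (hkey Λ hΛ j).2.2⟩, ?_⟩
      have hterm : ∀ j, (1:ℝ)/((Φ Λ j : ℤ) : ℝ) = 1/(2*(k:ℝ)) * (1/((Λ j : ℚ) : ℝ)) := by
        intro j
        have h1 : ((Φ Λ j : ℤ) : ℝ) = 2 * (k:ℝ) * ((Λ j : ℚ) : ℝ) := by
          have := (hkey Λ hΛ j).1
          have h2 : (((2 * (k:ℚ) * Λ j).num : ℚ) : ℝ) = ((2 * (k:ℚ) * Λ j : ℚ) : ℝ) := by
            exact_mod_cast congrArg (fun q : ℚ => (q:ℝ)) this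
          simpa [Φ] using h2.trans (by push_cast; ring)
        rw [h1, one_div, one_div, one_div, mul_inv, mul_inv]
      calc ∑ j, (1:ℝ)/((Φ Λ j : ℤ) : ℝ)
          = ∑ j, 1/(2*(k:ℝ)) * (1/((Λ j : ℚ) : ℝ)) := by
            exact Finset.sum_congr rfl (fun j _ => hterm j)
        _ = 1/(2*(k:ℝ)) * ∑ j, (1:ℝ)/((Λ j : ℚ) : ℝ) := by rw [Finset.mul_sum]
        _ = c / (2 * k) := by rw [hΛ.2]; ring
    have hinj : Set.InjOn Φ S := by
      intro Λ hΛ Λ' hΛ' hEq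
      funext j
      have h1 := (hkey Λ hΛ j).1
      have h2 := (hkey Λ' hΛ' j).1
      have : 2 * (k:ℚ) * Λ j = 2 * (k:ℚ) * Λ' j := by
        rw [← h1, ← h2]
        exact congrArg (fun z : ℤ => (z:ℚ)) (congrFun hEq j)
      exact mul_left_cancel₀ hk0' this
    exact Set.Finite.of_finite_image
      (Set.Finite.subset (egypt_finite (2 * (k:ℤ)) m (c / (2 * k))) himg) hinj
end
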